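/- For n ≥ 2, the group H_n = ⟨s_1, …, s_n | s_i s_j s_i^{-1} = s_j^{-1} for all i ≠ j⟩ has order 2^{n+1}. -/

import Mathlib

/-- The relators of `H_n = ⟨s₁, …, s_n ∣ sᵢ sⱼ sᵢ⁻¹ = sⱼ⁻¹ (i ≠ j)⟩`. -/
def HnRels (n : ℕ) : Set (FreeGroup (Fin n)) :=
  {r | ∃ i j : Fin n, i ≠ j ∧
    r = FreeGroup.of i * FreeGroup.of j * (FreeGroup.of i)⁻¹ * FreeGroup.of j}

namespace HnAux
variable {n : ℕ}

abbrev P (n : ℕ) := PresentedGroup (HnRels n)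
abbrev s (k : Fin n) : P n := PresentedGroup.of k

lemma rel {i j : Fin n} (h : i ≠ j) : s i * s j * (s i)⁻¹ * s j = 1 := by
  have hr : (FreeGroup.of i * FreeGroup.of j * (FreeGroup.of i)⁻¹ * FreeGroup.of j)
      ∈ Subgroup.normalClosure (HnRels n) :=
    Subgroup.subset_normalClosure ⟨i, j, h, rfl⟩
  have := (QuotientGroup.eq_one_iff _).2 hr
  simp only [s, PresentedGroup.of]
  rw [← map_inv (PresentedGroup.mk (HnRels n)), ← map_mul (PresentedGroup.mk (HnRels n)),
    ← map_mul (PresentedGroup.mk (HnRels n)), ← map_mul (PresentedGroup.mk (HnRels n))]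
  exact this

lemma conj {i j : Fin n} (h : i ≠ j) : s i * s j * (s i)⁻¹ = (s j)⁻¹ :=
  mul_eq_one_iff_eq_inv.mp (rel h)

lemma mul_eq {i j : Fin n} (h : i ≠ j) : s i * s j = (s j)⁻¹ * s i := by
  have hc := conj h
  calc s i * s j = (s i * s j * (s i)⁻¹) * s i := by group
  _ = (s j)⁻¹ * s i := by rw [hc]

lemma sq_eq {i j : Fin n} (h : i ≠ j) : s i * s i = s j * s j := by
  have A : s i * s j * ((s j)⁻¹ * s i) = s i * s i := by group
  have B : s i * ((s i)⁻¹ * s j) * s j = s j * s j := by group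
  have C : s i * s j * ((s j)⁻¹ * s i) = s i * ((s i)⁻¹ * s j) * s j := by
    rw [← mul_eq h, ← mul_eq h.symm]; group
  rw [← A, C, B]

lemma exists_ne (hn : 2 ≤ n) (k : Fin n) : ∃ j : Fin n, j ≠ k := by
  rcases Nat.eq_zero_or_pos k.val with hk | hk
  · exact ⟨⟨1, by omega⟩, by simp [Fin.ext_iff, hk]⟩
  · exact ⟨⟨0, by omega⟩, by simp [Fin.ext_iff]; omega⟩

lemma pow4 (hn : 2 ≤ n) (i : Fin n) : s i ^ 4 = 1 := by
  obtain ⟨j, hj⟩ := exists_ne hn i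
  have key : s i * s i = (s i)⁻¹ * (s i)⁻¹ := by
    have h1 : s j * (s i * s i) * (s j)⁻¹ = (s i)⁻¹ * (s i)⁻¹ := by
      calc s j * (s i * s i) * (s j)⁻¹ = (s j * s i) * s i * (s j)⁻¹ := by group
      _ = ((s i)⁻¹ * s j) * s i * (s j)⁻¹ := by rw [mul_eq hj]
      _ = (s i)⁻¹ * (s j * s i) * (s j)⁻¹ := by group
      _ = (s i)⁻¹ * ((s i)⁻¹ * s j) * (s j)⁻¹ := by rw [mul_eq hj]
      _ = (s i)⁻¹ * (s i)⁻¹ := by group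
    have h2 : s j * (s i * s i) * (s j)⁻¹ = s i * s i := by
      calc s j * (s i * s i) * (s j)⁻¹ = s j * (s j * s j) * (s j)⁻¹ := by
            rw [sq_eq (Ne.symm hj)]
      _ = s j * s j := by group
      _ = s i * s i := sq_eq hj
    rw [← h2, h1]
  calc s i ^ 4 = (s i * s i) * (s i * s i) := by
        rw [show (4:ℕ) = 2+2 from rfl, pow_add, pow_two]
  _ = ((s i)⁻¹ * (s i)⁻¹) * (s i * s i) := by nth_rewrite 1 [key]; rfl
  _ = 1 := by group

def zP (n : ℕ) (hn : 2 ≤ n) : P n := s ⟨0, by omega⟩ * s ⟨0, by omega⟩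

lemma sq_eq_z (hn : 2 ≤ n) (k : Fin n) : s k * s k = zP n hn := by
  rcases eq_or_ne k ⟨0, by omega⟩ with h | h
  · rw [h]; rfl
  · exact sq_eq h

lemma z_comm (hn : 2 ≤ n) (k : Fin n) : Commute (zP n hn) (s k) := by
  rw [← sq_eq_z hn k, ← pow_two]
  exact (Commute.refl (s k)).pow_left 2

lemma z_sq (hn : 2 ≤ n) : zP n hn * zP n hn = 1 := by
  have := pow4 hn (⟨0, by omega⟩ : Fin n)
  calc zP n hn * zP n hn = s ⟨0, by omega⟩ ^ 4 := by
        rw [zP, show (4:ℕ) = 2+2 from rfl, pow_add, pow_two]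
  _ = 1 := this

lemma mul_swap (hn : 2 ≤ n) {i j : Fin n} (h : i ≠ j) :
    s i * s j = zP n hn * (s j * s i) := by
  calc s i * s j = (s j)⁻¹ * s i := mul_eq h
  _ = (s j ^ 4) * (s j)⁻¹ * s i := by rw [pow4 hn]; group
  _ = (s j * s j) * (s j * s i) := by
        rw [show (4:ℕ) = 2+2 from rfl, pow_add, pow_two]; group
  _ = zP n hn * (s j * s i) := by rw [sq_eq_z hn]

end HnAux

namespace HnAux2
open HnAux
variable {n : ℕ} (hn : 2 ≤ n)

def Lp (l : List (Fin n)) (v : Fin n → ZMod 2) : P n :=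
  (l.map fun i => s i ^ (v i).val).prod

@[simp] lemma Lp_nil (v : Fin n → ZMod 2) : Lp [] v = 1 := rfl

lemma Lp_cons (i : Fin n) (l : List (Fin n)) (v : Fin n → ZMod 2) :
    Lp (i :: l) v = s i ^ (v i).val * Lp l v := by
  simp [Lp]

lemma z_comm_pow (i : Fin n) (e : ℕ) : Commute (zP n hn) (s i ^ e) :=
  (z_comm hn i).pow_right e

lemma z_comm_Lp (l : List (Fin n)) (v : Fin n → ZMod 2) :
    Commute (zP n hn) (Lp l v) := by
  induction l with
  | nil => exact Commute.one_right _
  | cons i l ih => rw [Lp_cons]; exact (z_comm_pow hn i _).mul_right ih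

lemma pow_swap {i k : Fin n} (h : i ≠ k) (e : ℕ) :
    s i ^ e * s k = zP n hn ^ e * s k * s i ^ e := by
  induction e with
  | zero => simp
  | succ e ih =>
    have hc : s i ^ e * zP n hn = zP n hn * s i ^ e := ((z_comm_pow hn i e).symm).eq
    calc s i ^ (e+1) * s k = s i ^ e * (s i * s k) := by rw [pow_succ, mul_assoc]
    _ = s i ^ e * (zP n hn * (s k * s i)) := by rw [mul_swap hn h]
    _ = (s i ^ e * zP n hn) * s k * s i := by simp [mul_assoc]
    _ = zP n hn * (s i ^ e * s k) * s i := by rw [hc]; simp [mul_assoc]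
    _ = zP n hn * (zP n hn ^ e * s k * s i ^ e) * s i := by rw [ih]
    _ = zP n hn ^ (e+1) * s k * s i ^ (e+1) := by
        have h1 : zP n hn * zP n hn ^ e = zP n hn ^ (e+1) := (pow_succ' _ _).symm
        rw [pow_succ (s i)]
        calc zP n hn * (zP n hn ^ e * s k * s i ^ e) * s i
            = (zP n hn * zP n hn ^ e) * s k * (s i ^ e * s i) := by simp [mul_assoc]
        _ = zP n hn ^ (e+1) * s k * (s i ^ e * s i) := by rw [h1]

lemma LpA {k : Fin n} {l : List (Fin n)} (hl : k ∉ l) (v : Fin n → ZMod 2) :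
    ∃ m : ℕ, Lp l v * s k = zP n hn ^ m * s k * Lp l v := by
  induction l with
  | nil => exact ⟨0, by simp⟩
  | cons i l ih =>
    have hik : i ≠ k := fun e => hl (e ▸ List.mem_cons_self)
    obtain ⟨m, hm⟩ := ih (fun h => hl (List.mem_cons_of_mem i h))
    refine ⟨m + (v i).val, ?_⟩
    have hc : s i ^ (v i).val * zP n hn ^ m = zP n hn ^ m * s i ^ (v i).val :=
      ((z_comm_pow hn i _).pow_left m).symm.eq
    calc Lp (i :: l) v * s k = s i ^ (v i).val * (Lp l v * s k) := by
          rw [Lp_cons]; simp [mul_assoc]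
    _ = s i ^ (v i).val * (zP n hn ^ m * s k * Lp l v) := by rw [hm]
    _ = (s i ^ (v i).val * zP n hn ^ m) * s k * Lp l v := by simp [mul_assoc]
    _ = zP n hn ^ m * (s i ^ (v i).val * s k) * Lp l v := by rw [hc]; simp [mul_assoc]
    _ = zP n hn ^ m * (zP n hn ^ (v i).val * s k * s i ^ (v i).val) * Lp l v := by
          rw [pow_swap hn hik]
    _ = zP n hn ^ (m + (v i).val) * s k * Lp (i :: l) v := by
          rw [pow_add, Lp_cons]; simp [mul_assoc]

lemma LpB {l : List (Fin n)} {v w : Fin n → ZMod 2} (h : ∀ i ∈ l, v i = w i) :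
    Lp l v = Lp l w := by
  unfold Lp
  congr 1
  exact List.map_congr_left (fun i hi => by rw [h i hi])

end HnAux2

namespace HnAux3
open HnAux HnAux2
variable {n : ℕ} (hn : 2 ≤ n)

lemma zmod2_cases : ∀ a : ZMod 2, a = 0 ∨ a = 1 := by decide

lemma pow_step (k : Fin n) (v : Fin n → ZMod 2) :
    ∃ t : ℕ, s k ^ ((v k).val + 1) = zP n hn ^ t * s k ^ ((v k + 1 : ZMod 2)).val := by
  rcases zmod2_cases (v k) with h | h
  · refine ⟨0, ?_⟩
    rw [h, show ((0:ZMod 2)+1) = 1 from by decide,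
      show ZMod.val (0 : ZMod 2) = 0 from rfl, show ZMod.val (1 : ZMod 2) = 1 from rfl]
    simp
  · refine ⟨1, ?_⟩
    rw [h, show ((1:ZMod 2)+1) = 0 from by decide,
      show ZMod.val (1 : ZMod 2) = 1 from rfl, show ZMod.val (0 : ZMod 2) = 0 from rfl,
      pow_one, pow_zero, mul_one, pow_two]
    exact sq_eq_z hn k

lemma LpC {k : Fin n} {l : List (Fin n)} (hk : k ∈ l) (hnd : l.Nodup)
    (v : Fin n → ZMod 2) :
    ∃ m : ℕ, Lp l v * s k = zP n hn ^ m * Lp l (v + Pi.single k 1) := by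
  induction l with
  | nil => simp at hk
  | cons i l ih =>
    have hnd' := hnd.of_cons
    rcases eq_or_ne i k with rfl | hik
    · have hkl : i ∉ l := (List.nodup_cons.mp hnd).1
      obtain ⟨m, hm⟩ := LpA hn hkl v
      obtain ⟨t, ht⟩ := pow_step hn i v
      have hLp : Lp l v = Lp l (v + Pi.single i 1) := by
        refine LpB (fun j hj => ?_)
        have hji : j ≠ i := fun e => hkl (e ▸ hj)
        simp [Pi.single_eq_of_ne hji]
      refine ⟨m + t, ?_⟩
      have hva : ((v + Pi.single i 1 : Fin n → ZMod 2) i) = v i + 1 := by simp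
      calc Lp (i :: l) v * s i = s i ^ (v i).val * (Lp l v * s i) := by
            rw [Lp_cons]; simp [mul_assoc]
      _ = s i ^ (v i).val * (zP n hn ^ m * s i * Lp l v) := by rw [hm]
      _ = (s i ^ (v i).val * zP n hn ^ m) * s i * Lp l v := by simp [mul_assoc]
      _ = zP n hn ^ m * (s i ^ (v i).val * s i) * Lp l v := by
            rw [((z_comm_pow hn i _).pow_left m).symm.eq]; simp [mul_assoc]
      _ = zP n hn ^ m * s i ^ ((v i).val + 1) * Lp l v := by rw [pow_succ]
      _ = zP n hn ^ m * (zP n hn ^ t * s i ^ ((v i + 1 : ZMod 2)).val) * Lp l v := by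
            rw [ht]
      _ = zP n hn ^ (m + t) * (s i ^ (((v + Pi.single i 1 : Fin n → ZMod 2) i)).val * Lp l (v + Pi.single i 1)) := by
            rw [pow_add, hva, hLp]; simp [mul_assoc]
      _ = zP n hn ^ (m + t) * Lp (i :: l) (v + Pi.single i 1) := by rw [Lp_cons]
    · have hkl : k ∈ l := by
        rcases List.mem_cons.mp hk with h | h
        · exact absurd h.symm hik
        · exact h
      obtain ⟨m, hm⟩ := ih hkl hnd'
      refine ⟨m, ?_⟩
      have hvi : ((v + Pi.single k 1 : Fin n → ZMod 2) i) = v i := by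
        simp [Pi.single_eq_of_ne hik]
      calc Lp (i :: l) v * s k = s i ^ (v i).val * (Lp l v * s k) := by
            rw [Lp_cons]; simp [mul_assoc]
      _ = s i ^ (v i).val * (zP n hn ^ m * Lp l (v + Pi.single k 1)) := by rw [hm]
      _ = zP n hn ^ m * (s i ^ ((v + Pi.single k 1 : Fin n → ZMod 2) i).val * Lp l (v + Pi.single k 1)) := by
            rw [hvi, ← mul_assoc, ((z_comm_pow hn i _).pow_left m).symm.eq]
            simp [mul_assoc]
      _ = zP n hn ^ m * Lp (i :: l) (v + Pi.single k 1) := by rw [Lp_cons]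

lemma z_pow_mod (m : ℕ) : zP n hn ^ m = zP n hn ^ ((m : ZMod 2)).val := by
  have h2 : zP n hn ^ 2 = 1 := by rw [pow_two]; exact z_sq hn
  have : (m : ZMod 2).val = m % 2 := ZMod.val_natCast 2 m
  rw [this]
  conv_lhs => rw [← Nat.div_add_mod m 2]
  rw [pow_add, pow_mul, h2, one_pow, one_mul]

def g (t : ZMod 2 × (Fin n → ZMod 2)) : P n :=
  zP n hn ^ t.1.val * Lp (List.finRange n) t.2

lemma g_step (t : ZMod 2 × (Fin n → ZMod 2)) (k : Fin n) :
    ∃ t', g hn t' = g hn t * s k := by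
  obtain ⟨a, v⟩ := t
  obtain ⟨m, hm⟩ := LpC hn (List.mem_finRange k) (List.nodup_finRange n) v
  refine ⟨(((a.val + m : ℕ) : ZMod 2), v + Pi.single k 1), ?_⟩
  calc g hn (((a.val + m : ℕ) : ZMod 2), v + Pi.single k 1)
      = zP n hn ^ (a.val + m) * Lp (List.finRange n) (v + Pi.single k 1) := by
        rw [g, ← z_pow_mod hn]
  _ = zP n hn ^ a.val * (zP n hn ^ m * Lp (List.finRange n) (v + Pi.single k 1)) := by
        rw [pow_add]; simp [mul_assoc]
  _ = zP n hn ^ a.val * (Lp (List.finRange n) v * s k) := by rw [hm]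
  _ = g hn (a, v) * s k := by rw [g]; simp [mul_assoc]

lemma g_step_inv (t : ZMod 2 × (Fin n → ZMod 2)) (k : Fin n) :
    ∃ t', g hn t' = g hn t * (s k)⁻¹ := by
  have hinv : (s k)⁻¹ = s k ^ 3 := by
    refine inv_eq_of_mul_eq_one_left ?_
    calc s k ^ 3 * s k = s k ^ 4 := by rw [← pow_succ]
    _ = 1 := pow4 hn k
  obtain ⟨t1, h1⟩ := g_step hn t k
  obtain ⟨t2, h2⟩ := g_step hn t1 k
  obtain ⟨t3, h3⟩ := g_step hn t2 k
  refine ⟨t3, ?_⟩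
  rw [h3, h2, h1, hinv]
  calc g hn t * s k * s k * s k = g hn t * (s k * s k * s k) := by simp [mul_assoc]
  _ = g hn t * s k ^ 3 := by rw [pow_succ, pow_two]

lemma g_one : g hn ((0 : ZMod 2), (0 : Fin n → ZMod 2)) = 1 := by
  rw [g]
  simp only [ZMod.val_zero, pow_zero, one_mul, Lp, Pi.zero_apply]
  simp

lemma g_surj : Function.Surjective (g hn) := by
  intro x
  have key : ∀ z : FreeGroup (Fin n), ∀ t, ∃ t',
      g hn t' = g hn t * PresentedGroup.mk (HnRels n) z := by
    intro z
    induction z using FreeGroup.induction_on with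
    | C1 => intro t; exact ⟨t, by simp⟩
    | of x => intro t; exact g_step hn t x
    | inv_of x _ =>
      intro t
      have : PresentedGroup.mk (HnRels n) (FreeGroup.of x : FreeGroup (Fin n))⁻¹ = (s x)⁻¹ := by
        rw [map_inv]; rfl
      rw [this]
      exact g_step_inv hn t x
    | mul y z' hy hz =>
      intro t
      rw [map_mul]
      obtain ⟨t1, h1⟩ := hy t
      obtain ⟨t2, h2⟩ := hz t1
      exact ⟨t2, by rw [h2, h1, mul_assoc]⟩
  induction x using PresentedGroup.induction_on with
  | H z =>
    obtain ⟨t', ht⟩ := key z ((0 : ZMod 2), (0 : Fin n → ZMod 2))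
    exact ⟨t', by rw [ht, g_one hn, one_mul]⟩

end HnAux3

/-- Cocycle -/
def coc {n : ℕ} (v w : Fin n → ZMod 2) : ZMod 2 :=
  ∑ i, ∑ j, if j ≤ i then v i * w j else 0

lemma coc_add_left {n : ℕ} (u v w : Fin n → ZMod 2) :
    coc (u + v) w = coc u w + coc v w := by
  simp only [coc, Pi.add_apply, add_mul]
  rw [← Finset.sum_add_distrib]
  congr 1; funext i
  rw [← Finset.sum_add_distrib]
  congr 1; funext j
  split <;> simp

lemma coc_add_right {n : ℕ} (u v w : Fin n → ZMod 2) :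
    coc u (v + w) = coc u v + coc u w := by
  simp only [coc, Pi.add_apply, mul_add]
  rw [← Finset.sum_add_distrib]
  congr 1; funext i
  rw [← Finset.sum_add_distrib]
  congr 1; funext j
  split <;> simp

@[simp] lemma coc_zero_left {n : ℕ} (w : Fin n → ZMod 2) : coc 0 w = 0 := by
  simp [coc]

@[simp] lemma coc_zero_right {n : ℕ} (w : Fin n → ZMod 2) : coc w 0 = 0 := by
  simp [coc]

lemma coc_single {n : ℕ} (i j : Fin n) :
    coc (Pi.single i (1 : ZMod 2)) (Pi.single j 1) = if j ≤ i then 1 else 0 := by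
  simp only [coc, Pi.single_apply]
  rw [Finset.sum_eq_single i]
  · rw [Finset.sum_eq_single j] <;> simp +contextual
  · intro b _ hb
    apply Finset.sum_eq_zero
    intro c _
    simp [hb]
  · simp

/-- concrete model -/
@[ext] structure Gn (n : ℕ) where
  a : ZMod 2
  v : Fin n → ZMod 2

namespace Gn
variable {n : ℕ}

instance : Mul (Gn n) := ⟨fun x y => ⟨x.a + y.a + coc x.v y.v, x.v + y.v⟩⟩
instance : One (Gn n) := ⟨⟨0, 0⟩⟩
instance : Inv (Gn n) := ⟨fun x => ⟨x.a + coc x.v x.v, x.v⟩⟩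

@[simp] lemma mul_a (x y : Gn n) : (x * y).a = x.a + y.a + coc x.v y.v := rfl
@[simp] lemma mul_v (x y : Gn n) : (x * y).v = x.v + y.v := rfl
@[simp] lemma one_a : (1 : Gn n).a = 0 := rfl
@[simp] lemma one_v : (1 : Gn n).v = 0 := rfl
@[simp] lemma inv_a (x : Gn n) : (x⁻¹).a = x.a + coc x.v x.v := rfl
@[simp] lemma inv_v (x : Gn n) : (x⁻¹).v = x.v := rfl

lemma two_zmod2 : ∀ a : ZMod 2, a + a = 0 := by decide

instance : Group (Gn n) where
  mul_assoc x y z := by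
    ext1
    · simp [coc_add_left, coc_add_right]; ring
    · simp [add_assoc]
  one_mul x := by ext1 <;> simp
  mul_one x := by ext1 <;> simp
  inv_mul_cancel x := by
    ext1
    · simp only [mul_a, inv_a, inv_v, one_a]
      have := two_zmod2 (x.a + coc x.v x.v); rw [← this]; ring
    · simp only [mul_v, inv_v, one_v]; funext i; exact two_zmod2 _

end Gn

namespace HnAux4
open HnAux HnAux2 HnAux3
variable {n : ℕ} (hn : 2 ≤ n)

def f (i : Fin n) : Gn n := ⟨0, Pi.single i 1⟩

lemma hrel : ∀ r ∈ HnRels n, FreeGroup.lift (f (n := n)) r = 1 := by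
  rintro r ⟨i, j, hij, rfl⟩
  rw [map_mul, map_mul, map_mul, map_inv, FreeGroup.lift_apply_of, FreeGroup.lift_apply_of]
  have hji : ¬(j ≤ i ∧ i ≤ j) := fun ⟨h1, h2⟩ => hij (le_antisymm h2 h1)
  ext1
  · simp only [f, Gn.mul_a, Gn.mul_v, Gn.inv_a, Gn.inv_v, Gn.one_a,
      coc_add_left, coc_add_right, coc_single]
    rcases le_total i j with h | h
    · have h2 : ¬ (j ≤ i) := fun hh => hji ⟨hh, h⟩
      simp [h, h2]
      decide
    · have h2 : ¬ i ≤ j := fun hh => hji ⟨h, hh⟩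
      simp [h, h2]
      decide
  · simp only [f, Gn.mul_v, Gn.inv_v, Gn.one_v]
    funext x
    simp only [Pi.add_apply, Pi.zero_apply, Pi.single_apply]
    split_ifs <;> decide

end HnAux4

namespace HnAux5
open HnAux HnAux2 HnAux3 HnAux4
variable {n : ℕ} (hn : 2 ≤ n)

noncomputable def φ : P n →* Gn n := PresentedGroup.toGroup hrel

lemma φ_s (k : Fin n) : φ (s k) = f k := PresentedGroup.toGroup.of hrel

lemma pow_v (x : Gn n) (e : ℕ) : (x ^ e).v = e • x.v := by
  induction e with
  | zero => simp
  | succ e ih => rw [pow_succ, Gn.mul_v, ih, succ_nsmul]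

lemma φ_Lp_v (l : List (Fin n)) (v : Fin n → ZMod 2) :
    (φ (Lp l v)).v = (l.map (fun i => (v i).val • Pi.single i (1 : ZMod 2))).sum := by
  induction l with
  | nil => simp [Lp]
  | cons i l ih =>
    rw [Lp_cons, map_mul, Gn.mul_v, ih, map_pow, φ_s, List.map_cons, List.sum_cons]
    congr 1
    rw [pow_v]
    rfl

lemma val_smul_one : ∀ a : ZMod 2, a.val • (1 : ZMod 2) = a := by decide

lemma sum_single (v : Fin n → ZMod 2) :
    ((List.finRange n).map (fun i => (v i).val • Pi.single i (1 : ZMod 2))).sum = v := by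
  rw [← Fin.sum_univ_def]
  have he : ∀ i : Fin n, (v i).val • Pi.single i (1 : ZMod 2) = (Pi.single i (v i) : Fin n → ZMod 2) := by
    intro i
    funext x
    simp only [Pi.smul_apply, Pi.single_apply]
    split_ifs
    · exact val_smul_one (v i)
    · exact smul_zero _
  rw [Finset.sum_congr rfl (fun i _ => he i)]
  exact Finset.univ_sum_single v

lemma φ_z_v : (φ (zP n hn)).v = 0 := by
  rw [zP, map_mul, φ_s, Gn.mul_v]
  funext x
  simp only [f, Pi.add_apply, Pi.zero_apply, Pi.single_apply]
  split_ifs <;> decide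

lemma φ_g_v (t : ZMod 2 × (Fin n → ZMod 2)) : (φ (g hn t)).v = t.2 := by
  rw [g, map_mul, Gn.mul_v, map_pow, pow_v, φ_z_v hn, φ_Lp_v, sum_single, smul_zero, zero_add]

lemma z_ne_one : zP n hn ≠ 1 := by
  intro h
  have h2 : (φ (zP n hn)).a = (φ (1 : P n)).a := by rw [h]
  rw [zP, map_mul, φ_s, map_one, Gn.mul_a, Gn.one_a] at h2
  simp only [f, coc_single, le_refl, if_pos] at h2
  exact absurd h2 (by decide)

lemma g_inj : Function.Injective (g hn) := by
  rintro ⟨a, v⟩ ⟨b, w⟩ h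
  have hv : v = w := by
    have := congrArg (fun x => (φ x).v) h
    simpa [φ_g_v hn] using this
  subst hv
  have hz : zP n hn ^ a.val = zP n hn ^ b.val := by
    have := h
    rw [g, g] at this
    exact mul_right_cancel this
  have hab : a = b := by
    rcases zmod2_cases a with ha | ha <;> rcases zmod2_cases b with hb | hb <;>
      subst ha <;> subst hb
    · rfl
    · rw [show ZMod.val (0 : ZMod 2) = 0 from rfl, show ZMod.val (1 : ZMod 2) = 1 from rfl,
        pow_zero, pow_one] at hz
      exact absurd hz.symm (z_ne_one hn)
    · rw [show ZMod.val (0 : ZMod 2) = 0 from rfl, show ZMod.val (1 : ZMod 2) = 1 from rfl,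
        pow_zero, pow_one] at hz
      exact absurd hz (z_ne_one hn)
    · rfl
  rw [hab]

end HnAux5

/-- For `n ≥ 2`, the group `H_n` has order `2^(n+1)`. -/
theorem card_Hn (n : ℕ) (hn : 2 ≤ n) :
    Nat.card (PresentedGroup (HnRels n)) = 2 ^ (n + 1) := by
  have hb : Function.Bijective (HnAux3.g hn) := ⟨HnAux5.g_inj hn, HnAux3.g_surj hn⟩
  have := Nat.card_eq_of_bijective _ hb
  rw [← this, Nat.card_prod, Nat.card_zmod, Nat.card_eq_fintype_card, Fintype.card_fun]
  simp [ZMod.card, pow_succ, Nat.mul_comm]
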